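/- For every s ∈ ℕ with s ≥ 2, there exists a ReLU network Φ^{max,s} with s-dimensional input and 1-dimensional output such that R(Φ^{max,s})(x₁,…,x_s) = max{x₁,…,x_s} for all (x₁,…,x_s) ∈ ℝ_{≥0}^s, and moreover W(Φ^{max,s}) ≤ 42·s, L(Φ^{max,s}) < 2·log₂ s + 3, and B(Φ^{max,s}) = 1. -/

import Mathlib

open MeasureTheory ProbabilityTheory Filter Matrix

noncomputable section

/-- Smallest number of closed `ℓ∞`-balls of radius `ε` needed to cover `E`
(the norm on `Fin D → ℝ` is the sup norm). -/
def coverNum {D : ℕ} (E : Set (Fin D → ℝ)) (ε : ℝ) : ℕ :=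
  sInf {n : ℕ | ∃ s : Finset (Fin D → ℝ), s.card = n ∧ E ⊆ ⋃ x ∈ s, Metric.closedBall x ε}

/-- Upper Minkowski dimension of a set `E ⊆ ℝ^D`. -/
def minkowskiDim {D : ℕ} (E : Set (Fin D → ℝ)) : ℝ :=
  sInf {d : ℝ | 0 ≤ d ∧
    Filter.limsup (fun ε : ℝ => (coverNum E ε : ℝ) * ε ^ d) (nhdsWithin 0 (Set.Ioi 0)) = 0}

/-- Support of a measure: points all of whose neighborhoods have positive measure. -/
def measSupport {D : ℕ} (μ : Measure (Fin D → ℝ)) : Set (Fin D → ℝ) :=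
  {x | ∀ U ∈ nhds x, 0 < μ U}

/-- The unit cube `[0,1]^D`. -/
def unitCube (D : ℕ) : Set (Fin D → ℝ) := Set.univ.pi fun _ => Set.Icc (0:ℝ) 1

/-- The largest integer strictly smaller than `β`. -/
def hFloor (β : ℝ) : ℕ := ⌈β⌉₊ - 1

/-- Partial derivative in the `j`-th coordinate direction. -/
def pderiv1 {D : ℕ} (j : Fin D) (f : (Fin D → ℝ) → ℝ) : (Fin D → ℝ) → ℝ :=
  fun x => fderiv ℝ f x (Pi.single j 1)

/-- Iterated partial derivative in the `j`-th direction. -/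
def pderivIter {D : ℕ} (j : Fin D) : ℕ → ((Fin D → ℝ) → ℝ) → ((Fin D → ℝ) → ℝ)
  | 0 => id
  | n + 1 => fun f => pderiv1 j (pderivIter j n f)

/-- Multi-index partial derivative `∂^α f`. -/
def mDeriv {D : ℕ} (α : Fin D → ℕ) (f : (Fin D → ℝ) → ℝ) : (Fin D → ℝ) → ℝ :=
  (List.ofFn fun j : Fin D => pderivIter j (α j)).foldr (fun op g => op g) f

/-- The Hölder ball `H(β, [0,1]^D, M)`. -/
def holderBall (D : ℕ) (β M : ℝ) : Set ((Fin D → ℝ) → ℝ) :=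
  {f | ContDiffOn ℝ (hFloor β : ℕ∞) f (unitCube D) ∧
    ∃ M₁ M₂ : ℝ, 0 ≤ M₁ ∧ 0 ≤ M₂ ∧ M₁ + M₂ ≤ M ∧
      (∀ α : Fin D → ℕ, (∑ j, α j) < hFloor β →
        ∀ x ∈ unitCube D, |mDeriv α f x| ≤ M₁) ∧
      (∀ α : Fin D → ℕ, (∑ j, α j) = hFloor β →
        ∀ x ∈ unitCube D, ∀ y ∈ unitCube D, x ≠ y →
          |mDeriv α f x - mDeriv α f y| ≤ M₂ * ‖x - y‖ ^ (β - (hFloor β : ℝ)))}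

/-- A ReLU neural-network architecture with `Lm + 1` layers; layer `ℓ` (for
`0 ≤ ℓ ≤ Lm`) is the affine map `v ↦ A ℓ *ᵥ v + b ℓ` from width `p ℓ` to width
`p (ℓ+1)`; ReLU is applied after every layer except the last. -/
structure NeuralNet where
  Lm : ℕ
  p : ℕ → ℕ
  A : ∀ ℓ : ℕ, Matrix (Fin (p (ℓ + 1))) (Fin (p ℓ)) ℝ
  b : ∀ ℓ : ℕ, Fin (p (ℓ + 1)) → ℝ

namespace NeuralNet

/-- Number of layers `L(Φ)`. -/
def depth (Φ : NeuralNet) : ℕ := Φ.Lm + 1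

/-- Hidden activations. -/
def hidden (Φ : NeuralNet) : (ℓ : ℕ) → (Fin (Φ.p 0) → ℝ) → (Fin (Φ.p ℓ) → ℝ)
  | 0, x => x
  | ℓ + 1, x => fun i => max ((Φ.A ℓ *ᵥ Φ.hidden ℓ x + Φ.b ℓ) i) 0

/-- Realization `R(Φ)` of the network. -/
def realize (Φ : NeuralNet) (x : Fin (Φ.p 0) → ℝ) : Fin (Φ.p (Φ.Lm + 1)) → ℝ :=
  Φ.A Φ.Lm *ᵥ Φ.hidden Φ.Lm x + Φ.b Φ.Lm

/-- `W(Φ)`: the number of nonzero parameters. -/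
def numParams (Φ : NeuralNet) : ℕ :=
  ∑ ℓ ∈ Finset.range (Φ.Lm + 1),
    ({ij : Fin (Φ.p (ℓ + 1)) × Fin (Φ.p ℓ) | Φ.A ℓ ij.1 ij.2 ≠ 0}.ncard
      + {i : Fin (Φ.p (ℓ + 1)) | Φ.b ℓ i ≠ 0}.ncard)

/-- `B(Φ)`: the maximal absolute value of the parameters. -/
def maxParam (Φ : NeuralNet) : ℝ :=
  sSup {r : ℝ | ∃ ℓ ≤ Φ.Lm, (∃ i j, r = |Φ.A ℓ i j|) ∨ ∃ i, r = |Φ.b ℓ i|}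

end NeuralNet

/-- `F(W, L, B)`: realizations of networks with input dimension `D`, output
dimension 1, at most `W` nonzero parameters, at most `L` layers, and parameter
magnitudes at most `B`. -/
def NNclass (D : ℕ) (W L B : ℝ) : Set ((Fin D → ℝ) → ℝ) :=
  {f | ∃ (Φ : NeuralNet) (h0 : Φ.p 0 = D) (h1 : Φ.p (Φ.Lm + 1) = 1),
    (Φ.numParams : ℝ) ≤ W ∧ (Φ.depth : ℝ) ≤ L ∧ Φ.maxParam ≤ B ∧
    ∀ x : Fin D → ℝ, f x = Φ.realize (fun i => x (Fin.cast h0 i)) (Fin.cast h1.symm 0)}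

/-- Version of `F(W, L, B)` with `m`-dimensional output. -/
def NNclassM (D m : ℕ) (W L B : ℝ) : Set ((Fin D → ℝ) → Fin m → ℝ) :=
  {f | ∃ (Φ : NeuralNet) (h0 : Φ.p 0 = D) (h1 : Φ.p (Φ.Lm + 1) = m),
    (Φ.numParams : ℝ) ≤ W ∧ (Φ.depth : ℝ) ≤ L ∧ Φ.maxParam ≤ B ∧
    ∀ (x : Fin D → ℝ) (i : Fin m),
      f x i = Φ.realize (fun j => x (Fin.cast h0 j)) (Fin.cast h1.symm i)}

/-- Covering number of a class of functions w.r.t. the `L^∞(μ)` norm. -/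
def funCoverNum {D : ℕ} (ε : ℝ) (F : Set ((Fin D → ℝ) → ℝ)) (μ : Measure (Fin D → ℝ)) : ℕ :=
  sInf {n : ℕ | ∃ s : Finset ((Fin D → ℝ) → ℝ), s.card = n ∧
    ∀ f ∈ F, ∃ g ∈ s, ∀ᵐ x ∂μ, |f x - g x| ≤ ε}

/-- The (upper) regularity dimension of a measure `ν` on `X`. -/
def regularityDim {D : ℕ} (X : Set (Fin D → ℝ)) (ν : Measure (Fin D → ℝ)) : ℝ :=
  sInf {d : ℝ | 0 < d ∧ ∃ C : ℝ, 0 < C ∧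
    ∀ x ∈ measSupport ν, ∀ ε ∈ Set.Ioo (0:ℝ) 1, ∀ r : ℝ, 0 < r →
      ν (Metric.closedBall x r ∩ X) ≤
        ENNReal.ofReal (C * ε ^ (-d)) * ν (Metric.closedBall x (ε * r) ∩ X)}

/-- Distance between two sets (w.r.t. the sup norm). -/
def setDist {D : ℕ} (A B : Set (Fin D → ℝ)) : ℝ :=
  sInf {r : ℝ | ∃ x ∈ A, ∃ y ∈ B, r = ‖x - y‖}

/-- The closed axis-aligned hypercube with lower corner `a` and side length `γ`. -/
def cornerCube {D : ℕ} (a : Fin D → ℝ) (γ : ℝ) : Set (Fin D → ℝ) :=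
  Set.univ.pi fun ℓ => Set.Icc (a ℓ) (a ℓ + γ)

/-- The closed axis-aligned hypercube with center `ι` and side length `γ`. -/
def centerCube {D : ℕ} (ι : Fin D → ℝ) (γ : ℝ) : Set (Fin D → ℝ) :=
  Set.univ.pi fun ℓ => Set.Icc (ι ℓ - γ / 2) (ι ℓ + γ / 2)

/-- `I ⊕ r`: the union of open `ℓ∞`-balls of radius `r` centered in `I`. -/
def expandSet {D : ℕ} (I : Set (Fin D → ℝ)) (r : ℝ) : Set (Fin D → ℝ) :=
  ⋃ z ∈ I, Metric.ball z r

/-- The Concentration Condition for a set `E ⊆ ℝ^K`. -/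
def ConcentrationCondition {K : ℕ} (E : Set (Fin K → ℝ)) : Prop :=
  ∃ C₁ C₂ : ℝ, 0 < C₁ ∧ 0 < C₂ ∧
    ∀ ε : ℝ, 0 < ε → ∃ (T U : ℕ) (x : Fin T → (Fin K → ℝ)) (g : Fin T → Fin U),
      E ⊆ ⋃ i, Metric.closedBall (x i) ε ∧
      (∀ j : Fin U, ∀ X : Finset (Fin T), (∀ i ∈ X, g i = j) → X.Nonempty →
        X ≠ Finset.univ.filter (fun i => g i = j) →
        ∃ i, g i = j ∧ i ∉ X ∧ ∃ k ∈ X, ‖x k - x i‖ ≤ ε) ∧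
      (T : ℝ) ≤ C₁ * coverNum E ε ∧
      (U : ℝ) * Real.log (1 / ε) ≤ C₂ * coverNum E ε

/-- Smallest number of closed Euclidean (`ℓ²`) balls of radius `ε` needed to cover `E`. -/
def coverNum2 {D : ℕ} (E : Set (Fin D → ℝ)) (ε : ℝ) : ℕ :=
  sInf {n : ℕ | ∃ s : Finset (Fin D → ℝ), s.card = n ∧
    E ⊆ ⋃ x ∈ s, {y | Real.sqrt (∑ j, (y j - x j) ^ 2) ≤ ε}}

end

noncomputable def mxE (r c : ℕ) : ℝ :=
  if r % 2 = 0 then (if c = r then 1 else if c = r + 1 then -1 else 0)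
  else (if c = r then 1 else 0)

noncomputable def mxW (s : ℕ) (x : Fin s → ℝ) : ℕ → ℕ → ℝ
  | 0, i => if h : i < s then x ⟨i, h⟩ else 0
  | (k+1), i => max (mxW s x k (2*i)) (mxW s x k (2*i+1))

lemma mxE_abs_le (r c : ℕ) : |mxE r c| ≤ 1 := by
  unfold mxE; split_ifs <;> norm_num

lemma mxW_nonneg {s : ℕ} {x : Fin s → ℝ} (hx : ∀ i, 0 ≤ x i) :
    ∀ k i, 0 ≤ mxW s x k i := by
  intro k
  induction k with
  | zero =>
    intro i; unfold mxW; split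
    · exact hx _
    · exact le_rfl
  | succ k ih => intro i; exact le_trans (ih (2*i)) (le_max_left _ _)

lemma mxW_zero {s K : ℕ} {x : Fin s → ℝ} (hsK : s ≤ 2^K) :
    ∀ k, k ≤ K → ∀ c, 2^(K-k) ≤ c → mxW s x k c = 0 := by
  intro k
  induction k with
  | zero =>
    intro _ c hc
    have hc' : 2 ^ K ≤ c := by simpa using hc
    unfold mxW
    rw [dif_neg]; omega
  | succ k ih =>
    intro hk c hc
    have ht : 2^(K-k) = 2 * 2^(K-(k+1)) := by
      rw [show K - k = (K-(k+1))+1 by omega, pow_succ]; ring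
    unfold mxW
    rw [ih (by omega) (2*c) (by omega), ih (by omega) (2*c+1) (by omega)]
    simp

lemma max_sub_add (a b : ℝ) : max (a - b) 0 + b = max a b := by
  rcases le_total a b with h | h
  · rw [max_eq_right h, max_eq_right (by linarith)]; ring
  · rw [max_eq_left h, max_eq_left (by linarith)]; ring

lemma mxE_sum1 (n j : ℕ) (G : ℕ → ℝ) (hG : ∀ c, n ≤ c → G c = 0) :
    ∑ c ∈ Finset.range n, mxE j c * G c =
      if j % 2 = 0 then G j - G (j+1) else G j := by
  have key : ∀ c ∈ Finset.range n, mxE j c * G c =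
      (if c = j then G c else 0) + (if c = j + 1 then (if j % 2 = 0 then -G c else 0) else 0) := by
    intro c _
    unfold mxE
    split_ifs <;> first | (exfalso; omega) | ring
  rw [Finset.sum_congr rfl key, Finset.sum_add_distrib, Finset.sum_ite_eq', Finset.sum_ite_eq']
  have e1 : (if j ∈ Finset.range n then G j else 0) = G j := by
    by_cases h : j < n
    · simp [Finset.mem_range, h]
    · simp [Finset.mem_range, h, hG j (le_of_not_gt h)]
  have e2 : (if j + 1 ∈ Finset.range n then (if j % 2 = 0 then -G (j+1) else 0) else 0)
      = if j % 2 = 0 then -G (j+1) else 0 := by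
    by_cases h : j + 1 < n
    · simp [Finset.mem_range, h]
    · simp [Finset.mem_range, h, hG (j+1) (by omega)]
  rw [e1, e2]
  split_ifs <;> ring

lemma mxE_sum2 (n j : ℕ) (G : ℕ → ℝ) (hG : ∀ c, n ≤ c → G c = 0) :
    ∑ c ∈ Finset.range n, mxE j (c/2) * G c =
      if j % 2 = 0 then (G (2*j) + G (2*j+1)) - (G (2*j+2) + G (2*j+3))
      else G (2*j) + G (2*j+1) := by
  have key : ∀ c ∈ Finset.range n, mxE j (c/2) * G c =
      ((if c = 2*j then G c else 0) + (if c = 2*j+1 then G c else 0))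
      + ((if c = 2*j+2 then (if j % 2 = 0 then -G c else 0) else 0)
        + (if c = 2*j+3 then (if j % 2 = 0 then -G c else 0) else 0)) := by
    intro c _
    unfold mxE
    split_ifs <;> first | (exfalso; omega) | ring
  rw [Finset.sum_congr rfl key, Finset.sum_add_distrib, Finset.sum_add_distrib,
    Finset.sum_add_distrib, Finset.sum_ite_eq', Finset.sum_ite_eq', Finset.sum_ite_eq',
    Finset.sum_ite_eq']
  have e0 : ∀ m : ℕ, (if m ∈ Finset.range n then G m else 0) = G m := by
    intro m
    by_cases h : m < n
    · simp [Finset.mem_range, h]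
    · simp [Finset.mem_range, h, hG m (le_of_not_gt h)]
  have e1 : ∀ m : ℕ, (if m ∈ Finset.range n then (if j % 2 = 0 then -G m else 0) else 0)
      = if j % 2 = 0 then -G m else 0 := by
    intro m
    by_cases h : m < n
    · simp [Finset.mem_range, h]
    · simp [Finset.mem_range, h, hG m (le_of_not_gt h)]
  rw [e0, e0, e1, e1]
  split_ifs <;> ring
noncomputable def maxNet (s K : ℕ) : NeuralNet where
  Lm := K
  p := fun ℓ => if ℓ = 0 then s else if ℓ ≤ K then 2^(K-ℓ+1) else 1
  A := fun ℓ r c =>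
    if ℓ = 0 then mxE (r:ℕ) (c:ℕ)
    else if ℓ < K then mxE (r:ℕ) ((c:ℕ)/2)
    else if ℓ = K then 1 else 0
  b := fun _ _ => 0

lemma maxNet_p0 (s K : ℕ) : (maxNet s K).p 0 = s := rfl

lemma maxNet_p_succ (s K k : ℕ) (h : k + 1 ≤ K) : (maxNet s K).p (k+1) = 2^(K-k) := by
  simp only [maxNet]
  rw [if_neg (by omega), if_pos h]
  congr 1; omega

lemma maxNet_p_last (s K : ℕ) : (maxNet s K).p (K+1+1) = 1 := by
  simp only [maxNet]
  rw [if_neg (by omega), if_neg (by omega)]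

lemma maxNet_A0 (s K : ℕ) (r : Fin ((maxNet s K).p 1)) (c : Fin ((maxNet s K).p 0)) :
    (maxNet s K).A 0 r c = mxE (r:ℕ) (c:ℕ) := by
  simp only [maxNet]
  rw [if_pos trivial]

lemma maxNet_Ak (s K k : ℕ) (h0 : k ≠ 0) (hK : k < K)
    (r : Fin ((maxNet s K).p (k+1))) (c : Fin ((maxNet s K).p k)) :
    (maxNet s K).A k r c = mxE (r:ℕ) ((c:ℕ)/2) := by
  simp only [maxNet]
  rw [if_neg h0, if_pos hK]

lemma maxNet_AK (s K : ℕ) (hK : 1 ≤ K)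
    (r : Fin ((maxNet s K).p (K+1))) (c : Fin ((maxNet s K).p K)) :
    (maxNet s K).A K r c = 1 := by
  simp only [maxNet]
  rw [if_neg (by omega), if_neg (by omega), if_pos trivial]

lemma maxNet_b (s K ℓ : ℕ) (i : Fin ((maxNet s K).p (ℓ+1))) : (maxNet s K).b ℓ i = 0 := rfl

lemma maxNet_hidden_succ (s K k : ℕ) (x' : Fin ((maxNet s K).p 0) → ℝ)
    (j : Fin ((maxNet s K).p (k+1))) :
    (maxNet s K).hidden (k+1) x' j =
      max (∑ c, (maxNet s K).A k j c * (maxNet s K).hidden k x' c) 0 := by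
  show max (((maxNet s K).A k *ᵥ (maxNet s K).hidden k x' + (maxNet s K).b k) j) 0 = _
  rw [Pi.add_apply, maxNet_b, add_zero]
  rfl

lemma mxW_succ (s : ℕ) (x : Fin s → ℝ) (k i : ℕ) :
    mxW s x (k+1) i = max (mxW s x k (2*i)) (mxW s x k (2*i+1)) := rfl

lemma maxNet_hidden_eq (s K : ℕ) (hsK : s ≤ 2^K)
    (x : Fin s → ℝ) (hx : ∀ i, 0 ≤ x i)
    (x' : Fin ((maxNet s K).p 0) → ℝ) (hx' : ∀ c, x' c = mxW s x 0 (c:ℕ)) :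
    ∀ k, k + 1 ≤ K → ∀ j : Fin ((maxNet s K).p (k+1)),
      (maxNet s K).hidden (k+1) x' j =
        if (j:ℕ) % 2 = 0 then max (mxW s x k (j:ℕ) - mxW s x k ((j:ℕ)+1)) 0
        else mxW s x k (j:ℕ) := by
  intro k
  induction k with
  | zero =>
    intro hK j
    rw [maxNet_hidden_succ]
    have hterm : ∀ c : Fin ((maxNet s K).p 0),
        (maxNet s K).A 0 j c * (maxNet s K).hidden 0 x' c
          = mxE (j:ℕ) (c:ℕ) * mxW s x 0 (c:ℕ) := by
      intro c
      rw [maxNet_A0]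
      have h2 : (maxNet s K).hidden 0 x' c = x' c := rfl
      rw [h2, hx']
    have hsum : ∑ c, (maxNet s K).A 0 j c * (maxNet s K).hidden 0 x' c
        = ∑ c ∈ Finset.range s, mxE (j:ℕ) c * mxW s x 0 c := by
      rw [Finset.sum_congr rfl (fun c _ => hterm c)]
      exact Fin.sum_univ_eq_sum_range (fun c => mxE (j:ℕ) c * mxW s x 0 c) s
    rw [hsum, mxE_sum1 s (j:ℕ) _ (fun c hc => by unfold mxW; rw [dif_neg (by omega)])]
    by_cases hj : (j:ℕ) % 2 = 0
    · rw [if_pos hj, if_pos hj]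
    · rw [if_neg hj, if_neg hj, max_eq_left (mxW_nonneg hx 0 _)]
  | succ k ih =>
    intro hK j
    have hk1 : k + 1 ≤ K := by omega
    set G : ℕ → ℝ := fun n =>
      if n % 2 = 0 then max (mxW s x k n - mxW s x k (n+1)) 0 else mxW s x k n with hG
    have hGzero : ∀ n, (maxNet s K).p (k+1) ≤ n → G n = 0 := by
      intro n hn
      rw [maxNet_p_succ s K k hk1] at hn
      have z1 : mxW s x k n = 0 := mxW_zero hsK k (by omega) n hn
      have z2 : mxW s x k (n+1) = 0 := mxW_zero hsK k (by omega) (n+1) (by omega)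
      simp [hG, z1, z2]
    have hGpair : ∀ i : ℕ, G (2*i) + G (2*i+1) = mxW s x (k+1) i := by
      intro i
      have e1 : G (2*i) = max (mxW s x k (2*i) - mxW s x k (2*i+1)) 0 := by
        simp only [hG]; rw [if_pos (by omega : (2*i) % 2 = 0)]
      have e2 : G (2*i+1) = mxW s x k (2*i+1) := by
        simp only [hG]; rw [if_neg (by omega : ¬ (2*i+1) % 2 = 0)]
      rw [e1, e2, max_sub_add, mxW_succ]
    rw [maxNet_hidden_succ]
    have hsum : ∑ c, (maxNet s K).A (k+1) j c * (maxNet s K).hidden (k+1) x' c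
        = ∑ c ∈ Finset.range ((maxNet s K).p (k+1)), mxE (j:ℕ) (c/2) * G c := by
      rw [Finset.sum_congr rfl (fun c _ => by
        rw [maxNet_Ak s K (k+1) (by omega) (by omega), ih hk1 c])]
      exact Fin.sum_univ_eq_sum_range (fun c => mxE (j:ℕ) (c/2) * G c) _
    rw [hsum, mxE_sum2 _ (j:ℕ) G hGzero]
    by_cases hj : (j:ℕ) % 2 = 0
    · rw [if_pos hj, if_pos hj, hGpair (j:ℕ)]
      have h4 : G (2 * (j:ℕ) + 2) + G (2 * (j:ℕ) + 3) = mxW s x (k+1) ((j:ℕ)+1) := by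
        rw [show (2*(j:ℕ)+2) = 2*((j:ℕ)+1) by ring, show (2*(j:ℕ)+3) = 2*((j:ℕ)+1)+1 by ring]
        exact hGpair ((j:ℕ)+1)
      rw [h4]
    · rw [if_neg hj, if_neg hj, hGpair (j:ℕ), max_eq_left (mxW_nonneg hx (k+1) _)]

lemma mxW_base (s : ℕ) (x : Fin s → ℝ) (n : ℕ) :
    mxW s x 0 n = if h : n < s then x ⟨n, h⟩ else 0 := rfl

lemma maxNet_realize (s K' : ℕ) (hsK : s ≤ 2^(K'+1))
    (x : Fin s → ℝ) (hx : ∀ i, 0 ≤ x i)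
    (x' : Fin ((maxNet s (K'+1)).p 0) → ℝ) (hx' : ∀ c, x' c = mxW s x 0 (c:ℕ))
    (j : Fin ((maxNet s (K'+1)).p ((maxNet s (K'+1)).Lm + 1))) :
    (maxNet s (K'+1)).realize x' j = mxW s x (K'+1) 0 := by
  set G : ℕ → ℝ := fun n =>
    if n % 2 = 0 then max (mxW s x K' n - mxW s x K' (n+1)) 0 else mxW s x K' n with hG
  change Fin ((maxNet s (K'+1)).p (K'+1+1)) at j
  show ((maxNet s (K'+1)).A (K'+1) *ᵥ (maxNet s (K'+1)).hidden (K'+1) x'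
    + (maxNet s (K'+1)).b (K'+1)) j = _
  rw [Pi.add_apply, maxNet_b, add_zero]
  have hmv : ((maxNet s (K'+1)).A (K'+1) *ᵥ (maxNet s (K'+1)).hidden (K'+1) x') j
      = ∑ c, (maxNet s (K'+1)).A (K'+1) j c * (maxNet s (K'+1)).hidden (K'+1) x' c := rfl
  rw [hmv]
  have hterm : ∀ c : Fin ((maxNet s (K'+1)).p (K'+1)),
      (maxNet s (K'+1)).A (K'+1) j c * (maxNet s (K'+1)).hidden (K'+1) x' c = G (c:ℕ) := by
    intro c
    rw [maxNet_AK s (K'+1) (by omega), one_mul]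
    exact maxNet_hidden_eq s (K'+1) hsK x hx x' hx' K' (by omega) c
  have hsum : ∑ c, (maxNet s (K'+1)).A (K'+1) j c * (maxNet s (K'+1)).hidden (K'+1) x' c
      = ∑ c ∈ Finset.range ((maxNet s (K'+1)).p (K'+1)), G c := by
    rw [Finset.sum_congr rfl (fun c _ => hterm c)]
    exact Fin.sum_univ_eq_sum_range G _
  rw [hsum, maxNet_p_succ s (K'+1) K' (by omega), show K'+1 - K' = 1 by omega, pow_one,
    Finset.sum_range_succ, Finset.sum_range_succ, Finset.sum_range_zero]
  have e0 : G 0 = max (mxW s x K' 0 - mxW s x K' 1) 0 := by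
    simp [hG]
  have e1 : G 1 = mxW s x K' 1 := by
    simp [hG]
  rw [e0, e1, zero_add, max_sub_add, mxW_succ]

lemma mxW_sup (s : ℕ) (x : Fin s → ℝ) :
    ∀ k j, mxW s x k j = (Finset.range (2^k)).sup'
      (Finset.nonempty_range_iff.mpr (pow_ne_zero k two_ne_zero))
      (fun i => mxW s x 0 (2^k * j + i)) := by
  intro k
  induction k with
  | zero =>
    intro j
    apply le_antisymm
    · have h0 : (0:ℕ) ∈ Finset.range (2^0) := by norm_num
      have : mxW s x 0 j = mxW s x 0 (2^0 * j + 0) := by norm_num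
      rw [this]
      exact Finset.le_sup' (fun i => mxW s x 0 (2^0 * j + i)) h0
    · apply Finset.sup'_le
      intro i hi
      have : i = 0 := by simpa [Finset.mem_range] using hi
      subst this
      have : mxW s x 0 (2^0 * j + 0) = mxW s x 0 j := by norm_num
      rw [this]
  | succ k ih =>
    intro j
    have hne : (Finset.range (2^k)).Nonempty :=
      Finset.nonempty_range_iff.mpr (pow_ne_zero k two_ne_zero)
    have h2 : (2:ℕ)^(k+1) = 2^k + 2^k := by rw [pow_succ, Nat.mul_two]
    have hA : mxW s x k (2*j) = (Finset.range (2^k)).sup' hne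
        (fun i => mxW s x 0 (2^(k+1) * j + i)) := by
      rw [ih (2*j)]
      apply Finset.sup'_congr hne rfl
      intro i _
      rw [show 2^k * (2*j) + i = 2^(k+1)*j + i by rw [pow_succ]; ring]
    have hB : mxW s x k (2*j+1) = ((Finset.range (2^k)).map (addLeftEmbedding (2^k))).sup'
        (Finset.Nonempty.map hne) (fun i => mxW s x 0 (2^(k+1) * j + i)) := by
      rw [Finset.sup'_map, ih (2*j+1)]
      apply Finset.sup'_congr hne rfl
      intro i _
      show mxW s x 0 (2^k * (2*j+1) + i) = mxW s x 0 (2^(k+1)*j + (addLeftEmbedding (2^k) i))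
      rw [addLeftEmbedding_apply]
      congr 1
      rw [pow_succ]; ring
    rw [mxW_succ, hA, hB]
    have hunion : Finset.range (2^k) ∪ (Finset.range (2^k)).map (addLeftEmbedding (2^k))
        = Finset.range (2^(k+1)) := by
      rw [← Finset.range_add, ← h2]
    calc (Finset.range (2^k)).sup' hne (fun i => mxW s x 0 (2^(k+1) * j + i)) ⊔
          ((Finset.range (2^k)).map (addLeftEmbedding (2^k))).sup'
            (Finset.Nonempty.map hne) (fun i => mxW s x 0 (2^(k+1) * j + i))
        = (Finset.range (2^k) ∪ (Finset.range (2^k)).map (addLeftEmbedding (2^k))).sup' _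
            (fun i => mxW s x 0 (2^(k+1) * j + i)) :=
          (Finset.sup'_union hne (Finset.Nonempty.map hne) _).symm
      _ = (Finset.range (2^(k+1))).sup' _ (fun i => mxW s x 0 (2^(k+1) * j + i)) :=
          Finset.sup'_congr _ hunion (fun i _ => rfl)

lemma mxW_top (s K : ℕ) (hs : 2 ≤ s) (hsK : s ≤ 2^K) (x : Fin s → ℝ) (hx : ∀ i, 0 ≤ x i) :
    mxW s x K 0 = ⨆ i, x i := by
  haveI : Nonempty (Fin s) := ⟨⟨0, by omega⟩⟩
  have hne : (Finset.univ : Finset (Fin s)).Nonempty := ⟨⟨0, by omega⟩, Finset.mem_univ _⟩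
  have hsup : (⨆ i, x i) = Finset.univ.sup' hne x := by
    apply le_antisymm
    · exact ciSup_le (fun i => Finset.le_sup' x (Finset.mem_univ i))
    · obtain ⟨i, _, hi⟩ := Finset.exists_mem_eq_sup' hne x
      rw [hi]
      exact le_ciSup (Set.Finite.bddAbove (Set.finite_range x)) i
  rw [hsup, mxW_sup s x K 0]
  apply le_antisymm
  · apply Finset.sup'_le
    intro i _
    rw [mxW_base]
    split
    · exact Finset.le_sup' x (Finset.mem_univ _)
    · exact le_trans (hx ⟨0, by omega⟩) (Finset.le_sup' x (Finset.mem_univ _))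
  · apply Finset.sup'_le
    intro i _
    have hi : (i:ℕ) ∈ Finset.range (2^K) := Finset.mem_range.mpr (by omega)
    have hx2 : x i = mxW s x 0 (2^K * 0 + (i:ℕ)) := by
      rw [mxW_base, dif_pos (show 2^K * 0 + (i:ℕ) < s by simp)]
      congr 1
      apply Fin.ext
      simp
    rw [hx2]
    exact Finset.le_sup' (fun n => mxW s x 0 (2^K * 0 + n)) hi

lemma nonzero_ncard_le {m n : ℕ} (A : Matrix (Fin m) (Fin n) ℝ) (g h : Fin n → ℕ)
    (H : ∀ r c, A r c ≠ 0 → (r:ℕ) = g c ∨ (r:ℕ) = h c) :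
    {ij : Fin m × Fin n | A ij.1 ij.2 ≠ 0}.ncard ≤ 2 * n := by
  have hinj : Set.InjOn (fun ij : Fin m × Fin n => (ij.2, decide ((ij.1:ℕ) = g ij.2)))
      {ij : Fin m × Fin n | A ij.1 ij.2 ≠ 0} := by
    intro a ha b hb hab
    have h2 : a.2 = b.2 := congrArg Prod.fst hab
    have h3 : ((a.1:ℕ) = g a.2) ↔ ((b.1:ℕ) = g b.2) :=
      decide_eq_decide.mp (congrArg Prod.snd hab)
    have h1 : a.1 = b.1 := by
      apply Fin.ext
      by_cases hc : (a.1:ℕ) = g a.2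
      · have hb1 : (b.1:ℕ) = g b.2 := h3.mp hc
        rw [hc, h2, hb1]
      · have hb1 : ¬ (b.1:ℕ) = g b.2 := fun hh => hc (h3.mpr hh)
        have ha' : (a.1:ℕ) = h a.2 := (H a.1 a.2 ha).resolve_left hc
        have hb' : (b.1:ℕ) = h b.2 := (H b.1 b.2 hb).resolve_left hb1
        rw [ha', h2, hb']
    exact Prod.ext h1 h2
  calc {ij : Fin m × Fin n | A ij.1 ij.2 ≠ 0}.ncard
      ≤ (Set.univ : Set (Fin n × Bool)).ncard :=
        Set.ncard_le_ncard_of_injOn _ (fun a _ => Set.mem_univ _) hinj Set.finite_univ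
    _ = 2 * n := by
        rw [Set.ncard_univ, Nat.card_eq_fintype_card, Fintype.card_prod, Fintype.card_fin,
          Fintype.card_bool, Nat.mul_comm]

lemma maxNet_p_out (s K m : ℕ) (hm : K < m) (h0 : m ≠ 0) : (maxNet s K).p m = 1 := by
  simp only [maxNet]
  rw [if_neg h0, if_neg (by omega)]

lemma maxNet_A_ncard (s K : ℕ) (hK : 1 ≤ K) (ℓ : ℕ) (hℓ : ℓ ≤ K) :
    {ij : Fin ((maxNet s K).p (ℓ+1)) × Fin ((maxNet s K).p ℓ) |
      (maxNet s K).A ℓ ij.1 ij.2 ≠ 0}.ncard ≤ 2 * (maxNet s K).p ℓ := by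
  rcases Nat.eq_zero_or_pos ℓ with h0 | h0
  · subst h0
    apply nonzero_ncard_le _ (fun c => (c:ℕ)) (fun c => (c:ℕ) - 1)
    intro r c hrc
    rw [maxNet_A0] at hrc
    revert hrc
    unfold mxE
    split_ifs <;> intro hrc <;> first | omega | (exact absurd rfl hrc)
  · rcases eq_or_lt_of_le hℓ with hKe | hKl
    · subst hKe
      apply nonzero_ncard_le _ (fun _ => 0) (fun _ => 0)
      intro r c _
      left
      have h1 := r.isLt
      have h2 : (maxNet s ℓ).p (ℓ+1) = 1 := maxNet_p_out s ℓ (ℓ+1) (by omega) (by omega)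
      omega
    · apply nonzero_ncard_le _ (fun c => (c:ℕ)/2) (fun c => (c:ℕ)/2 - 1)
      intro r c hrc
      rw [maxNet_Ak s K ℓ (by omega) hKl] at hrc
      revert hrc
      unfold mxE
      split_ifs <;> intro hrc <;> first | omega | (exact absurd rfl hrc)

lemma two_pow_sum : ∀ n : ℕ, ∑ i ∈ Finset.range n, 2^i = 2^n - 1 := by
  intro n
  induction n with
  | zero => simp
  | succ n ih =>
    rw [Finset.sum_range_succ, ih]
    have h1 : (2:ℕ)^(n+1) = 2^n + 2^n := by rw [pow_succ, Nat.mul_two]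
    have h2 : 1 ≤ (2:ℕ)^n := Nat.one_le_two_pow
    omega

lemma maxNet_numParams (s K' : ℕ) (hs : 2 ≤ s) (hlt : 2^K' < s) :
    (maxNet s (K'+1)).numParams ≤ 42 * s := by
  have hK : 1 ≤ K' + 1 := by omega
  have hb0 : ∀ ℓ : ℕ, {i : Fin ((maxNet s (K'+1)).p (ℓ+1)) |
      (maxNet s (K'+1)).b ℓ i ≠ 0}.ncard = 0 := by
    intro ℓ
    have : {i : Fin ((maxNet s (K'+1)).p (ℓ+1)) | (maxNet s (K'+1)).b ℓ i ≠ 0} = ∅ := by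
      ext i; simp [maxNet_b]
    rw [this, Set.ncard_empty]
  have hstep : (maxNet s (K'+1)).numParams ≤
      ∑ ℓ ∈ Finset.range (K'+2), 2 * (maxNet s (K'+1)).p ℓ := by
    apply Finset.sum_le_sum
    intro ℓ hℓ
    rw [hb0 ℓ, Nat.add_zero]
    exact maxNet_A_ncard s (K'+1) hK ℓ (by
      have h := Finset.mem_range.mp hℓ
      have hLm : (maxNet s (K'+1)).Lm = K'+1 := rfl
      omega)
  refine le_trans hstep ?_
  rw [Finset.sum_range_succ']
  have hgeo : ∑ ℓ ∈ Finset.range (K'+1), 2 * (maxNet s (K'+1)).p (ℓ+1)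
      = 2 * (2^(K'+2) - 2) := by
    have h1 : ∀ ℓ ∈ Finset.range (K'+1),
        2 * (maxNet s (K'+1)).p (ℓ+1) = 2 * 2^(K'+1-ℓ) := by
      intro ℓ hℓ
      rw [maxNet_p_succ s (K'+1) ℓ (by have := Finset.mem_range.mp hℓ; omega)]
    rw [Finset.sum_congr rfl h1]
    have h2 : ∀ ℓ ∈ Finset.range (K'+1), 2 * 2^(K'+1-ℓ) = 2 * 2^((K'+1-1-ℓ)+1) := by
      intro ℓ hℓ
      congr 1
      congr 1
      have := Finset.mem_range.mp hℓ; omega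
    rw [Finset.sum_congr rfl h2, Finset.sum_range_reflect (fun i => 2 * 2^(i+1)) (K'+1)]
    have h3 : ∀ ℓ ∈ Finset.range (K'+1), 2 * 2^(ℓ+1) = 4 * 2^ℓ := by
      intro ℓ _
      rw [pow_succ]; ring
    rw [Finset.sum_congr rfl h3, ← Finset.mul_sum, two_pow_sum]
    have h4 : (2:ℕ)^(K'+2) = 4 * 2^K' := by rw [pow_add]; ring
    have h5 : (2:ℕ)^(K'+1) = 2 * 2^K' := by rw [pow_succ]; ring
    have h6 : 1 ≤ (2:ℕ)^K' := Nat.one_le_two_pow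
    omega
  rw [hgeo]
  have hp0 : (maxNet s (K'+1)).p 0 = s := rfl
  rw [hp0]
  have h4 : (2:ℕ)^(K'+2) = 4 * 2^K' := by rw [pow_add]; ring
  omega

lemma maxNet_A_abs_le (s K : ℕ) (ℓ : ℕ) (i : Fin ((maxNet s K).p (ℓ+1)))
    (j : Fin ((maxNet s K).p ℓ)) : |(maxNet s K).A ℓ i j| ≤ 1 := by
  show |if ℓ = 0 then mxE (i:ℕ) (j:ℕ) else if ℓ < K then mxE (i:ℕ) ((j:ℕ)/2)
    else if ℓ = K then (1:ℝ) else 0| ≤ 1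
  split_ifs <;> first | exact mxE_abs_le _ _ | norm_num

lemma maxNet_maxParam (s K' : ℕ) (hs : 2 ≤ s) : (maxNet s (K'+1)).maxParam = 1 := by
  have hp2 : (maxNet s (K'+1)).p (K'+1) = 2 := by
    rw [maxNet_p_succ s (K'+1) K' (by omega), show K'+1-K' = 1 by omega, pow_one]
  have hplast : (maxNet s (K'+1)).p (K'+1+1) = 1 :=
    maxNet_p_out s (K'+1) (K'+1+1) (by omega) (by omega)
  have hub : ∀ r ∈ {r : ℝ | ∃ ℓ ≤ (maxNet s (K'+1)).Lm,
      (∃ i j, r = |(maxNet s (K'+1)).A ℓ i j|) ∨ ∃ i, r = |(maxNet s (K'+1)).b ℓ i|},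
      r ≤ 1 := by
    rintro r ⟨ℓ, hℓ, (⟨i, j, rfl⟩ | ⟨i, rfl⟩)⟩
    · exact maxNet_A_abs_le s (K'+1) ℓ i j
    · rw [maxNet_b]; norm_num
  have hmem : (1:ℝ) ∈ {r : ℝ | ∃ ℓ ≤ (maxNet s (K'+1)).Lm,
      (∃ i j, r = |(maxNet s (K'+1)).A ℓ i j|) ∨ ∃ i, r = |(maxNet s (K'+1)).b ℓ i|} := by
    refine ⟨K'+1, le_refl _, Or.inl ⟨⟨0, by rw [hplast]; omega⟩, ⟨0, by rw [hp2]; omega⟩, ?_⟩⟩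
    rw [maxNet_AK s (K'+1) (by omega)]
    norm_num
  exact le_antisymm (csSup_le ⟨1, hmem⟩ hub) (le_csSup ⟨1, hub⟩ hmem)

/-- A ReLU max network for nonnegative inputs. -/
theorem max_network_exists
    (s : ℕ) (hs : 2 ≤ s) :
    ∃ (Φ : NeuralNet) (h0 : Φ.p 0 = s) (h1 : Φ.p (Φ.Lm + 1) = 1),
      Φ.numParams ≤ 42 * s ∧
      (Φ.depth : ℝ) < 2 * Real.logb 2 (s : ℝ) + 3 ∧
      Φ.maxParam = 1 ∧
      ∀ x : Fin s → ℝ, (∀ i, 0 ≤ x i) →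
        Φ.realize (fun i => x (Fin.cast h0 i)) (Fin.cast h1.symm 0) = ⨆ i, x i := by

  have hclog : Nat.clog 2 s = (Nat.clog 2 s - 1) + 1 := by
    have := Nat.clog_pos (by norm_num : 1 < 2) hs; omega
  set K' := Nat.clog 2 s - 1 with hK'
  have hsK : s ≤ 2^(K'+1) := by rw [← hclog]; exact Nat.le_pow_clog (by norm_num) s
  have hlt : 2^K' < s := by
    have h := Nat.pow_pred_clog_lt_self (by norm_num : 1 < 2) (by omega : 1 < s)
    simpa [hK', Nat.pred_eq_sub_one] using h
  refine ⟨maxNet s (K'+1), rfl, maxNet_p_out s (K'+1) (K'+1+1) (by omega) (by omega),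
    maxNet_numParams s K' hs hlt, ?_,
    maxNet_maxParam s K' hs, ?_⟩
  · -- depth bound
    have hdepth : (maxNet s (K'+1)).depth = K' + 2 := rfl
    rw [hdepth]
    have h1 : (2:ℝ)^K' < (s:ℝ) := by exact_mod_cast hlt
    have h2 : (K':ℝ) < Real.logb 2 s := by
      have h3 : Real.logb 2 ((2:ℝ)^K') = K' := by
        rw [Real.logb_pow]
        simp
      rw [← h3]
      apply Real.logb_lt_logb (by norm_num) (by positivity) h1
    have h4 : (0:ℝ) ≤ Real.logb 2 s :=
      Real.logb_nonneg (by norm_num) (by exact_mod_cast Nat.one_le_of_lt hs)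
    push_cast
    linarith
  · -- realization
    intro x hx
    have hx' : ∀ c : Fin ((maxNet s (K'+1)).p 0),
        (fun i => x (Fin.cast rfl i)) c = mxW s x 0 (c:ℕ) := by
      intro c
      have hcs : (c:ℕ) < s := c.isLt
      rw [mxW_base, dif_pos hcs]
      show x (Fin.cast rfl c) = x ⟨(c:ℕ), hcs⟩
      congr 1
    exact (maxNet_realize s K' hsK x hx _ hx' _).trans (mxW_top s (K'+1) hs hsK x hx)
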